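/- Define a compiler C from the WHILE language to the labeled assembly language: C(skip) = [], C(assign f) = [exec f], C(seq s1 s2) = C(s1) ++ C(s2), C(ite c s1 s2) = [cjmp (¬c) l_else] ++ C(s1) ++ [jmp l_end, label l_else] ++ C(s2) ++ [label l_end] (with fresh labels), and C(while c s) = [label l_start, cjmp (¬c) l_end] ++ C(s) ++ [jmp l_start, label l_end] (with fresh labels). Then C is correct for terminating programs: if (s, σ) ⇓ σ' in the big-step semantics, then executing C(s) (embedded at any position of a larger program, with its labels fresh) starting at its first instruction in state σ reaches the instruction following C(s) in state σ'. -/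

import Mathlib

/-- A small imperative (WHILE) language over an arbitrary state type. -/
inductive Stmt (State : Type*) where
  | skip : Stmt State
  | assign (update : State → State) : Stmt State
  | seq (s₁ s₂ : Stmt State) : Stmt State
  | ite (cond : State → Bool) (s₁ s₂ : Stmt State) : Stmt State
  | whileLoop (cond : State → Bool) (s : Stmt State) : Stmt State

/-- Standard big-step operational semantics `(s, σ) ⇓ σ'`. -/
inductive BigStep {State : Type*} : Stmt State → State → State → Prop where
  | skip {σ} : BigStep .skip σ σ
  | assign {f σ} : BigStep (.assign f) σ (f σ)
  | seq {s₁ s₂ σ σ' σ''} :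
      BigStep s₁ σ σ' → BigStep s₂ σ' σ'' → BigStep (.seq s₁ s₂) σ σ''
  | iteTrue {c s₁ s₂ σ σ'} :
      c σ = true → BigStep s₁ σ σ' → BigStep (.ite c s₁ s₂) σ σ'
  | iteFalse {c s₁ s₂ σ σ'} :
      c σ = false → BigStep s₂ σ σ' → BigStep (.ite c s₁ s₂) σ σ'
  | whileTrue {c s σ σ' σ''} :
      c σ = true → BigStep s σ σ' → BigStep (.whileLoop c s) σ' σ'' →
      BigStep (.whileLoop c s) σ σ''
  | whileFalse {c s σ} :
      c σ = false → BigStep (.whileLoop c s) σ σ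

/-- Instructions of a linear (labeled) assembly language. -/
inductive Instr (State Label : Type*) where
  | exec (f : State → State) : Instr State Label
  | jmp (l : Label) : Instr State Label
  | cjmp (c : State → Bool) (l : Label) : Instr State Label
  | label (l : Label) : Instr State Label

/-- Small-step semantics with a program counter on configurations
`(pc, σ)`: `exec` applies its function and increments the counter, `label`
is a no-op, jumps move the counter to a position holding `label l`. -/
inductive Step {State Label : Type*} (P : List (Instr State Label)) :
    ℕ × State → ℕ × State → Prop where
  | exec {pc σ f} : P[pc]? = some (.exec f) → Step P (pc, σ) (pc + 1, f σ)
  | label {pc σ l} : P[pc]? = some (.label l) → Step P (pc, σ) (pc + 1, σ)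
  | jmp {pc pc' σ l} : P[pc]? = some (.jmp l) →
      P[pc']? = some (.label l) → Step P (pc, σ) (pc', σ)
  | cjmpTrue {pc pc' σ c l} : P[pc]? = some (.cjmp c l) → c σ = true →
      P[pc']? = some (.label l) → Step P (pc, σ) (pc', σ)
  | cjmpFalse {pc σ c l} : P[pc]? = some (.cjmp c l) → c σ = false →
      Step P (pc, σ) (pc + 1, σ)

/-- Execution of a whole program: start at counter `0`, terminate when the
counter reaches the program length. -/
def Runs {State Label : Type*} (P : List (Instr State Label))
    (σ σ' : State) : Prop :=
  Relation.ReflTransGen (Step P) (0, σ) (P.length, σ')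

/-- A program is jump-free if it contains no `jmp` or `cjmp` instruction. -/
def JumpFree {State Label : Type*} (P : List (Instr State Label)) : Prop :=
  ∀ i ∈ P, match i with
    | .jmp _ => False
    | .cjmp _ _ => False
    | _ => True

/-- Straight-line effect of a program: the composition, in order, of all its
`exec` functions. -/
def effect {State Label : Type*} (P : List (Instr State Label)) :
    State → State :=
  P.foldl (fun g i => match i with | .exec f => f ∘ g | _ => g) id

/-- Labels occurring as `label` instructions in a program. -/
def labelsOf {State Label : Type*} (P : List (Instr State Label)) :
    List Label :=
  P.filterMap (fun i => match i with | .label l => some l | _ => none)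

/-- The compiler from the WHILE language to labeled assembly, threading a
fresh-label counter.  `compile s n = (code, n')`: the generated code uses
fresh labels in `[n, n')`. -/
def compile {State : Type*} : Stmt State → ℕ → List (Instr State ℕ) × ℕ
  | .skip, n => ([], n)
  | .assign f, n => ([.exec f], n)
  | .seq s₁ s₂, n =>
      let r₁ := compile s₁ n
      let r₂ := compile s₂ r₁.2
      (r₁.1 ++ r₂.1, r₂.2)
  | .ite c s₁ s₂, n =>
      let lelse := n
      let lend := n + 1
      let r₁ := compile s₁ (n + 2)
      let r₂ := compile s₂ r₁.2
      ([.cjmp (fun σ => !c σ) lelse] ++ r₁.1 ++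
        [.jmp lend, .label lelse] ++ r₂.1 ++ [.label lend], r₂.2)
  | .whileLoop c s, n =>
      let lstart := n
      let lend := n + 1
      let r := compile s (n + 2)
      ([.label lstart, .cjmp (fun σ => !c σ) lend] ++ r.1 ++
        [.jmp lstart, .label lend], r.2)

section Aux

variable {State : Type*}

/-- `L` is embedded in `P` at offset `k`. -/
def EmbedAt (P L : List (Instr State ℕ)) (k : ℕ) : Prop :=
  ∀ i x, L[i]? = some x → P[k + i]? = some x

lemma EmbedAt.append {P L₁ L₂ : List (Instr State ℕ)} {k : ℕ}
    (h : EmbedAt P (L₁ ++ L₂) k) :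
    EmbedAt P L₁ k ∧ EmbedAt P L₂ (k + L₁.length) := by
  constructor
  · intro i x hx
    obtain ⟨hlt, -⟩ := List.getElem?_eq_some_iff.mp hx
    exact h i x (by rw [List.getElem?_append_left hlt]; exact hx)
  · intro i x hx
    have hx' : (L₁ ++ L₂)[L₁.length + i]? = some x := by
      rw [List.getElem?_append_right (Nat.le_add_right _ _)]
      simpa using hx
    have := h (L₁.length + i) x hx'
    rwa [← Nat.add_assoc] at this

lemma EmbedAt.cons {P : List (Instr State ℕ)} {a : Instr State ℕ}
    {L : List (Instr State ℕ)} {k : ℕ} (h : EmbedAt P (a :: L) k) :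
    P[k]? = some a ∧ EmbedAt P L (k + 1) := by
  constructor
  · simpa using h 0 a rfl
  · intro i x hx
    have := h (i + 1) x (by simpa using hx)
    rwa [show k + (i + 1) = k + 1 + i by omega] at this

lemma compile_run {s : Stmt State} {σ σ' : State} (h : BigStep s σ σ') :
    ∀ (n k : ℕ) (P : List (Instr State ℕ)), EmbedAt P (compile s n).1 k →
      Relation.ReflTransGen (Step P) (k, σ)
        (k + (compile s n).1.length, σ') := by
  induction h with
  | skip =>
      intro n k P _
      simpa [compile] using (Relation.ReflTransGen.refl :
        Relation.ReflTransGen (Step P) (k, _) (k, _))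
  | @assign f σ =>
      intro n k P hE
      have hp : P[k]? = some (.exec f) := by
        simpa using hE 0 (.exec f) rfl
      simpa [compile] using Relation.ReflTransGen.single (Step.exec hp)
  | @seq s₁ s₂ σ σ' σ'' h₁ h₂ ih₁ ih₂ =>
      intro n k P hE
      simp only [compile] at hE ⊢
      obtain ⟨hE1, hE2⟩ := hE.append
      have r₁ := ih₁ n k P hE1
      have r₂ := ih₂ (compile s₁ n).2 (k + (compile s₁ n).1.length) P hE2
      have := r₁.trans r₂
      simpa [Nat.add_assoc] using this
  | @iteTrue c s₁ s₂ σ σ' hc h₁ ih₁ =>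
      intro n k P hE
      simp only [compile, List.cons_append, List.append_assoc,
        List.nil_append] at hE ⊢
      obtain ⟨h0, hE1⟩ := hE.cons
      obtain ⟨hC1, hE2⟩ := hE1.append
      obtain ⟨hjmp, hE3⟩ := hE2.cons
      obtain ⟨hlelse, hE4⟩ := hE3.cons
      obtain ⟨hC2, hE5⟩ := hE4.append
      have hlend : P[k + 1 + (compile s₁ (n + 2)).1.length + 1 + 1 +
          (compile s₂ (compile s₁ (n + 2)).2).1.length]? =
          some (.label (n + 1)) := by
        simpa using hE5 0 _ rfl
      have step1 : Step P (k, σ) (k + 1, σ) :=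
        Step.cjmpFalse h0 (by simp [hc])
      have r₁ := ih₁ (n + 2) (k + 1) P hC1
      have step2 := Step.jmp (σ := σ') hjmp hlend
      have step3 := Step.label (σ := σ') hlend
      have run := (Relation.ReflTransGen.head step1 r₁).trans
        ((Relation.ReflTransGen.single step2).tail step3)
      convert run using 2
      simp [List.length_append]
      omega
  | @iteFalse c s₁ s₂ σ σ' hc h₂ ih₂ =>
      intro n k P hE
      simp only [compile, List.cons_append, List.append_assoc,
        List.nil_append] at hE ⊢
      obtain ⟨h0, hE1⟩ := hE.cons
      obtain ⟨hC1, hE2⟩ := hE1.append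
      obtain ⟨hjmp, hE3⟩ := hE2.cons
      obtain ⟨hlelse, hE4⟩ := hE3.cons
      obtain ⟨hC2, hE5⟩ := hE4.append
      have hlend : P[k + 1 + (compile s₁ (n + 2)).1.length + 1 + 1 +
          (compile s₂ (compile s₁ (n + 2)).2).1.length]? =
          some (.label (n + 1)) := by
        simpa using hE5 0 _ rfl
      have step1 : Step P (k, σ)
          (k + 1 + (compile s₁ (n + 2)).1.length + 1, σ) :=
        Step.cjmpTrue h0 (by simp [hc]) hlelse
      have step2 := Step.label (σ := σ) hlelse
      have r₂ := ih₂ (compile s₁ (n + 2)).2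
        (k + 1 + (compile s₁ (n + 2)).1.length + 1 + 1) P hC2
      have step3 := Step.label (σ := σ') hlend
      have run := ((Relation.ReflTransGen.head step1
        (Relation.ReflTransGen.single step2)).trans r₂).tail step3
      convert run using 2
      simp [List.length_append]
      omega
  | @whileTrue c s σ σ' σ'' hc hbody hrest ihbody ihrest =>
      intro n k P hE
      have hE' := hE
      simp only [compile, List.cons_append, List.append_assoc,
        List.nil_append] at hE ⊢
      obtain ⟨hstart, hE1⟩ := hE.cons
      obtain ⟨hcjmp, hE2⟩ := hE1.cons
      obtain ⟨hB, hE3⟩ := hE2.append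
      obtain ⟨hjmp, hE4⟩ := hE3.cons
      have step1 : Step P (k, σ) (k + 1, σ) := Step.label hstart
      have step2 : Step P (k + 1, σ) (k + 1 + 1, σ) :=
        Step.cjmpFalse hcjmp (by simp [hc])
      have rbody := ihbody (n + 2) (k + 1 + 1) P hB
      have stepback : Step P
          (k + 1 + 1 + (compile s (n + 2)).1.length, σ') (k, σ') :=
        Step.jmp hjmp hstart
      have rrest := ihrest n k P hE'
      simp only [compile, List.cons_append, List.append_assoc,
        List.nil_append] at rrest
      exact (Relation.ReflTransGen.head step1
        ((Relation.ReflTransGen.head step2 rbody).tail stepback)).trans rrest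
  | @whileFalse c s σ hc =>
      intro n k P hE
      simp only [compile, List.cons_append, List.append_assoc,
        List.nil_append] at hE ⊢
      obtain ⟨hstart, hE1⟩ := hE.cons
      obtain ⟨hcjmp, hE2⟩ := hE1.cons
      obtain ⟨hB, hE3⟩ := hE2.append
      obtain ⟨hjmp, hE4⟩ := hE3.cons
      have hlend : P[k + 1 + 1 + (compile s (n + 2)).1.length + 1]? =
          some (.label (n + 1)) := by
        simpa using hE4.cons.1
      have step1 : Step P (k, σ) (k + 1, σ) := Step.label hstart
      have step2 : Step P (k + 1, σ)
          (k + 1 + 1 + (compile s (n + 2)).1.length + 1, σ) :=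
        Step.cjmpTrue hcjmp (by simp [hc]) hlend
      have step3 := Step.label (σ := σ) hlend
      have run := (Relation.ReflTransGen.head step1
        (Relation.ReflTransGen.single step2)).tail step3
      convert run using 2
      simp [List.length_append]
      omega

end Aux

/-- compiler correctness for terminating programs.  If
`(s, σ) ⇓ σ'`, then executing the code `compile s n` embedded at any position
of a larger program `Q ++ (compile s n).1 ++ R` — provided the labels it
introduces (those in `[n, (compile s n).2)`) are fresh, i.e. occur neither in
`Q` nor in `R` — starting at its first instruction in state `σ` reaches the
instruction following it in state `σ'`. -/
theorem compile_correct {State : Type*} (s : Stmt State) (σ σ' : State)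
    (n : ℕ) (Q R : List (Instr State ℕ))
    (hfresh : ∀ l, n ≤ l → l < (compile s n).2 →
      l ∉ labelsOf Q ∧ l ∉ labelsOf R)
    (h : BigStep s σ σ') :
    Relation.ReflTransGen (Step (Q ++ (compile s n).1 ++ R))
      (Q.length, σ) (Q.length + (compile s n).1.length, σ') := by
  have hemb : EmbedAt (Q ++ (compile s n).1 ++ R) (compile s n).1 Q.length := by
    intro i x hx
    obtain ⟨hlt, -⟩ := List.getElem?_eq_some_iff.mp hx
    rw [List.getElem?_append_left (by simp; omega),
      List.getElem?_append_right (Nat.le_add_right _ _)]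
    simpa using hx
  exact compile_run h n Q.length _ hemb
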